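/- arXiv:1311.4588 — 2 statements merged into one kernel-verified Lean document; each statement's English description precedes it below -/
import Mathlib

section
/- Convergence factor bound for linear Parareal: with U^k_n as in the scalar linear iteration and U_n = f^n·u_0 the exact fine solution, if |g| ≤ 1 then max_{0≤n≤N} |U^{k+1}_n − U_n| ≤ N·|f−g| · max_{0≤n≤N} |U^k_n − U_n|, so Parareal converges at least linearly with factor N·|f−g| whenever N·|f−g| < 1. -/
/-- Linear convergence of Parareal with factor `N * |f - g|` when `|g| ≤ 1`. -/
theorem parareal_linear_convergence_factor
    (N : ℕ) (f g u0 : ℂ) (hg : ‖g‖ ≤ 1)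
    (U : ℕ → ℕ → ℂ)
    (hinit : ∀ k, U k 0 = u0)
    (hrec : ∀ k n, n < N → U (k + 1) (n + 1) = g * U (k + 1) n + (f - g) * U k n) :
    ∀ k, ∀ M : ℝ, (∀ n ≤ N, ‖U k n - f ^ n * u0‖ ≤ M) →
      ∀ n ≤ N, ‖U (k + 1) n - f ^ n * u0‖
        ≤ N * ‖f - g‖ * M := by
  intro k M hM n hn
  have hM0 : 0 ≤ M := le_trans (by positivity) (hM 0 (Nat.zero_le _))
  have key : ∀ m, m ≤ N → ‖U (k + 1) m - f ^ m * u0‖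
      ≤ m * ‖f - g‖ * M := by
    intro m
    induction m with
    | zero => intro _; simp [hinit]
    | succ m ih =>
      intro hm
      have hmN : m < N := Nat.lt_of_succ_le hm
      have ihm := ih (le_of_lt hmN)
      have hstep : U (k + 1) (m + 1) - f ^ (m + 1) * u0
          = g * (U (k + 1) m - f ^ m * u0) + (f - g) * (U k m - f ^ m * u0) := by
        rw [hrec k m hmN]; ring
      rw [hstep]
      calc ‖g * (U (k + 1) m - f ^ m * u0) + (f - g) * (U k m - f ^ m * u0)‖
          ≤ ‖g * (U (k + 1) m - f ^ m * u0)‖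
            + ‖(f - g) * (U k m - f ^ m * u0)‖ := norm_add_le _ _
        _ = ‖g‖ * ‖U (k + 1) m - f ^ m * u0‖
            + ‖f - g‖ * ‖U k m - f ^ m * u0‖ := by
            rw [norm_mul, norm_mul]
        _ ≤ 1 * (m * ‖f - g‖ * M) + ‖f - g‖ * M := by
            exact add_le_add
              (mul_le_mul hg ihm (norm_nonneg _) zero_le_one)
              (mul_le_mul_of_nonneg_left (hM m (le_of_lt hmN)) (norm_nonneg _))
        _ = (m + 1 : ℕ) * ‖f - g‖ * M := by push_cast; ring
  calc ‖U (k + 1) n - f ^ n * u0‖ ≤ n * ‖f - g‖ * M := key n hn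
    _ ≤ N * ‖f - g‖ * M := by
        gcongr
end

section
/- Damping of the Parareal error recurrence under strong coarse contraction: if |g| ≤ γ < 1 and |f − g| ≤ δ, then for every bounded initial error sequence with e^0_0 = 0, sup_n |e^k_n| ≤ (δ/(1−γ))^k · sup_n |e^0_n| for all k ≥ 0. -/
/-- Damping of the Parareal error under strong coarse contraction:
`sup_n |e^k_n| ≤ (δ/(1-γ))^k · sup_n |e^0_n|`. -/
theorem parareal_error_damping
    (γ δ : ℝ) (hγ0 : 0 ≤ γ) (hγ : γ < 1) (hδ : 0 ≤ δ)
    (f g : ℂ) (hg : ‖g‖ ≤ γ) (hfg : ‖f - g‖ ≤ δ)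
    (e : ℕ → ℕ → ℂ) (M : ℝ)
    (h0 : ∀ k, e k 0 = 0)
    (hrec : ∀ k n, e (k + 1) (n + 1) = g * e (k + 1) n + (f - g) * e k n)
    (hM : ∀ n, ‖e 0 n‖ ≤ M) :
    ∀ k n, ‖e k n‖ ≤ (δ / (1 - γ)) ^ k * M := by
  have h1γ : 0 < 1 - γ := by linarith
  have hM0 : 0 ≤ M := le_trans (norm_nonneg _) (hM 0)
  set C := δ / (1 - γ) with hC
  have hC0 : 0 ≤ C := div_nonneg hδ h1γ.le
  have hkey : γ * C + δ = C := by
    rw [hC]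
    field_simp [h1γ.ne']
    ring
  intro k
  induction k with
  | zero => intro n; simpa using hM n
  | succ k ih =>
    intro n
    induction n with
    | zero => simp [h0, pow_succ]; positivity
    | succ n ihn =>
      rw [hrec]
      calc ‖g * e (k+1) n + (f - g) * e k n‖
          ≤ ‖g * e (k+1) n‖ + ‖(f - g) * e k n‖ :=
            norm_add_le _ _
        _ = ‖g‖ * ‖e (k+1) n‖
            + ‖f - g‖ * ‖e k n‖ := by
            rw [norm_mul, norm_mul]
        _ ≤ γ * (C ^ (k+1) * M) + δ * (C ^ k * M) := by
            have := ihn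
            have := ih n
            gcongr
        _ = C ^ (k+1) * M := by
            rw [show γ * (C ^ (k+1) * M) + δ * (C ^ k * M)
                  = (γ * C + δ) * (C ^ k * M) from by ring, hkey]
            ring
end
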